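/- arXiv:1306.1556 — 2 statements merged into one kernel-verified Lean document; each statement's English description precedes it below -/
import Mathlib

section
/- Fix an integer n ≥ 1, a real p with 0 < p ≤ 1, and a real δ with 0 < δ < 1. Define the joint outage probability p_o^{(n)}(Δ) = 1 − ∑_{k=1}^n (−1)^{k+1} · (n choose k) · exp(−Δ · D_k(p,δ)) for Δ > 0. Then the limit as Δ → 0⁺ of δ · log(p_o^{(n)}(Δ)) / log(Δ) exists and equals δ, independently of n. -/
open Real Filter Set
open Topology

/-- Diversity polynomial `D_n(p,δ) = ∑_{k=1}^n C(n,k) ((∏_{j=1}^{k-1} (δ-j))/(k-1)!) p^k`. -/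
noncomputable def divPoly (n : ℕ) (p δ : ℝ) : ℝ :=
  ∑ k ∈ Finset.Icc 1 n, (n.choose k : ℝ) *
    ((∏ j ∈ Finset.Icc 1 (k - 1), (δ - (j : ℝ))) / (Nat.factorial (k - 1) : ℝ)) * p ^ k

/-- Joint outage probability of `n` transmissions. -/
noncomputable def outageProb (n : ℕ) (p δ Δ : ℝ) : ℝ :=
  1 - ∑ k ∈ Finset.Icc 1 n, (-1 : ℝ) ^ (k + 1) * (n.choose k : ℝ) *
    Real.exp (-Δ * divPoly k p δ)

/-- Auxiliary coefficient `t_m`. -/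
noncomputable def tcoef (p δ : ℝ) (m : ℕ) : ℝ :=
  ((∏ j ∈ Finset.Icc 1 (m - 1), (δ - (j : ℝ))) / (Nat.factorial (m - 1) : ℝ)) * p ^ m

lemma divPoly_eq_tcoef (k : ℕ) (p δ : ℝ) :
    divPoly k p δ = ∑ m ∈ Finset.Icc 1 k, (k.choose m : ℝ) * tcoef p δ m := by
  unfold divPoly tcoef
  exact Finset.sum_congr rfl fun m _ => by ring

lemma alt_sum_real (N : ℕ) :
    ∑ i ∈ Finset.range (N + 1), (-1 : ℝ) ^ i * (N.choose i : ℝ)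
      = if N = 0 then 1 else 0 := by
  have h := Int.alternating_sum_range_choose (n := N)
  have h2 : ((∑ m ∈ Finset.range (N + 1), ((-1) ^ m * N.choose m : ℤ) : ℤ) : ℝ)
      = ((if N = 0 then 1 else 0 : ℤ) : ℝ) := by exact_mod_cast h
  push_cast at h2
  split_ifs with hN <;> simpa [hN] using h2

lemma innerAltSum (n m : ℕ) (hm1 : 1 ≤ m) (hmn : m ≤ n) :
    ∑ k ∈ Finset.Icc 1 n, (-1 : ℝ) ^ (k + 1) * (n.choose k : ℝ) * (k.choose m : ℝ)
      = if m = n then (-1 : ℝ) ^ (n + 1) else 0 := by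
  rw [← Finset.sum_subset (Finset.Icc_subset_Icc_left hm1)
      (fun k hk hk' => ?_)]
  swap
  · -- k ∈ Icc 1 n, k ∉ Icc m n ⇒ k < m ⇒ choose k m = 0
    simp only [Finset.mem_Icc] at hk hk'
    have hkm : k < m := by omega
    rw [Nat.choose_eq_zero_of_lt hkm]
    simp
  · have hsum : ∑ k ∈ Finset.Icc m n, (-1 : ℝ) ^ (k + 1) * (n.choose k : ℝ) * (k.choose m : ℝ)
        = ∑ i ∈ Finset.range (n - m + 1),
            (-1 : ℝ) ^ (m + i + 1) * (n.choose m : ℝ) * ((n - m).choose i : ℝ) := by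
      rw [← Finset.Ico_add_one_right_eq_Icc, Finset.sum_Ico_eq_sum_range]
      have hr : n + 1 - m = n - m + 1 := by omega
      rw [hr]
      refine Finset.sum_congr rfl fun i hi => ?_
      simp only [Finset.mem_range] at hi
      have hkn : m + i ≤ n := by omega
      have hmk : m ≤ m + i := Nat.le_add_right m i
      have := Nat.choose_mul (n := n) (k := m + i) (s := m) hmk
      have hcast : ((n.choose (m + i) : ℝ) * ((m + i).choose m : ℝ))
          = (n.choose m : ℝ) * ((n - m).choose (m + i - m) : ℝ) := by exact_mod_cast this
      have hii : m + i - m = i := by omega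
      rw [hii] at hcast
      calc (-1 : ℝ) ^ (m + i + 1) * (n.choose (m + i) : ℝ) * ((m + i).choose m : ℝ)
          = (-1 : ℝ) ^ (m + i + 1) * ((n.choose (m + i) : ℝ) * ((m + i).choose m : ℝ)) := by ring
        _ = (-1 : ℝ) ^ (m + i + 1) * ((n.choose m : ℝ) * ((n - m).choose i : ℝ)) := by rw [hcast]
        _ = (-1 : ℝ) ^ (m + i + 1) * (n.choose m : ℝ) * ((n - m).choose i : ℝ) := by ring
    rw [hsum]
    have : ∑ i ∈ Finset.range (n - m + 1),
        (-1 : ℝ) ^ (m + i + 1) * (n.choose m : ℝ) * ((n - m).choose i : ℝ)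
        = (-1 : ℝ) ^ (m + 1) * (n.choose m : ℝ) *
          ∑ i ∈ Finset.range (n - m + 1), (-1 : ℝ) ^ i * ((n - m).choose i : ℝ) := by
      rw [Finset.mul_sum]
      refine Finset.sum_congr rfl fun i _ => ?_
      rw [pow_add, pow_add, pow_add]
      ring
    rw [this, alt_sum_real]
    by_cases hmn' : m = n
    · subst hmn'
      simp
    · have : n - m ≠ 0 := by omega
      simp [this, hmn']

lemma key_identity (n : ℕ) (hn : 1 ≤ n) (p δ : ℝ) :
    ∑ k ∈ Finset.Icc 1 n, (-1 : ℝ) ^ (k + 1) * (n.choose k : ℝ) * divPoly k p δ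
      = (-1 : ℝ) ^ (n + 1) * tcoef p δ n := by
  have h1 : ∀ k ∈ Finset.Icc 1 n,
      (-1 : ℝ) ^ (k + 1) * (n.choose k : ℝ) * divPoly k p δ
        = ∑ m ∈ Finset.Icc 1 n,
            (-1 : ℝ) ^ (k + 1) * (n.choose k : ℝ) * ((k.choose m : ℝ) * tcoef p δ m) := by
    intro k hk
    simp only [Finset.mem_Icc] at hk
    rw [divPoly_eq_tcoef, Finset.mul_sum]
    refine Finset.sum_subset (Finset.Icc_subset_Icc_right hk.2) fun m hm hm' => ?_
    simp only [Finset.mem_Icc] at hm hm'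
    have : k < m := by omega
    rw [Nat.choose_eq_zero_of_lt this]
    simp
  rw [Finset.sum_congr rfl h1, Finset.sum_comm]
  have h2 : ∀ m ∈ Finset.Icc 1 n,
      ∑ k ∈ Finset.Icc 1 n,
          (-1 : ℝ) ^ (k + 1) * (n.choose k : ℝ) * ((k.choose m : ℝ) * tcoef p δ m)
        = (if m = n then (-1 : ℝ) ^ (n + 1) else 0) * tcoef p δ m := by
    intro m hm
    simp only [Finset.mem_Icc] at hm
    rw [← innerAltSum n m hm.1 hm.2, Finset.sum_mul]
    exact Finset.sum_congr rfl fun k _ => by ring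
  rw [Finset.sum_congr rfl h2]
  rw [Finset.sum_eq_single n (fun m _ hne => by simp [hne])
    (fun h => absurd (Finset.mem_Icc.mpr ⟨hn, le_refl n⟩) h)]
  simp

lemma sum_alt_one (n : ℕ) (hn : 1 ≤ n) :
    ∑ k ∈ Finset.Icc 1 n, (-1 : ℝ) ^ (k + 1) * (n.choose k : ℝ) = 1 := by
  have h := alt_sum_real n
  rw [if_neg (by omega : n ≠ 0), Finset.sum_range_succ'] at h
  simp only [pow_zero, Nat.choose_zero_right, Nat.cast_one, one_mul] at h
  have hIcc : ∑ k ∈ Finset.Icc 1 n, (-1 : ℝ) ^ (k + 1) * (n.choose k : ℝ)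
      = ∑ i ∈ Finset.range n, (-1 : ℝ) ^ (1 + i + 1) * (n.choose (1 + i) : ℝ) := by
    rw [← Finset.Ico_add_one_right_eq_Icc, Finset.sum_Ico_eq_sum_range]
    simp
  rw [hIcc]
  have : ∀ i, (-1 : ℝ) ^ (1 + i + 1) * (n.choose (1 + i) : ℝ)
      = -((-1 : ℝ) ^ (i + 1) * (n.choose (i + 1) : ℝ)) := by
    intro i
    rw [show 1 + i + 1 = (i + 1) + 1 by ring, show (1 + i) = i + 1 by ring, pow_succ]
    ring
  simp_rw [this, Finset.sum_neg_distrib]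
  linarith [h]

theorem stmt6 (n : ℕ) (hn : 1 ≤ n) (p : ℝ) (hp0 : 0 < p) (hp1 : p ≤ 1)
    (δ : ℝ) (hδ0 : 0 < δ) (hδ1 : δ < 1) :
    Tendsto (fun Δ : ℝ => δ * Real.log (outageProb n p δ Δ) / Real.log Δ)
      (nhdsWithin 0 (Ioi 0)) (nhds δ) := by
  set f : ℝ → ℝ := fun Δ => outageProb n p δ Δ with hf
  set c : ℝ := ∑ k ∈ Finset.Icc 1 n, (-1 : ℝ) ^ (k + 1) * (n.choose k : ℝ) * divPoly k p δ
    with hc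
  have hcval : c = (-1 : ℝ) ^ (n + 1) * tcoef p δ n := key_identity n hn p δ
  have htne : tcoef p δ n ≠ 0 := by
    unfold tcoef
    refine mul_ne_zero (div_ne_zero ?_ ?_) (pow_ne_zero _ (ne_of_gt hp0))
    · refine Finset.prod_ne_zero_iff.mpr fun j hj => ?_
      simp only [Finset.mem_Icc] at hj
      have : (1 : ℝ) ≤ (j : ℝ) := by exact_mod_cast hj.1
      intro h
      have : δ = (j : ℝ) := by linarith [sub_eq_zero.mp h]
      linarith
    · exact_mod_cast Nat.factorial_ne_zero _
  have hcne : c ≠ 0 := by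
    rw [hcval]
    exact mul_ne_zero (pow_ne_zero _ (by norm_num)) htne
  have hf0 : f 0 = 0 := by
    simp only [hf, outageProb, neg_zero, zero_mul, Real.exp_zero, mul_one]
    rw [sum_alt_one n hn]
    ring
  have hderiv : HasDerivAt f c 0 := by
    have hterm : ∀ k ∈ Finset.Icc 1 n, HasDerivAt
        (fun Δ : ℝ => (-1 : ℝ) ^ (k + 1) * (n.choose k : ℝ) * Real.exp (-Δ * divPoly k p δ))
        ((-1 : ℝ) ^ (k + 1) * (n.choose k : ℝ) * (-(divPoly k p δ))) 0 := by
      intro k _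
      have h1 : HasDerivAt (fun Δ : ℝ => -Δ * divPoly k p δ) (-(divPoly k p δ)) 0 := by
        simpa using ((hasDerivAt_id (0 : ℝ)).neg.mul_const (divPoly k p δ))
      have h2 := h1.exp
      simp only [neg_zero, zero_mul, Real.exp_zero, one_mul] at h2
      exact h2.const_mul _
    have hsum := HasDerivAt.fun_sum hterm
    have h3 := hsum.const_sub 1
    refine h3.congr_deriv ?_
    rw [hc, ← Finset.sum_neg_distrib]
    exact Finset.sum_congr rfl fun k _ => by ring
  have hslope := hasDerivAt_iff_tendsto_slope.mp hderiv
  have hsub : 𝓝[>] (0 : ℝ) ≤ 𝓝[≠] (0 : ℝ) := nhdsWithin_mono _ fun x hx => ne_of_gt hx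
  have hg : Tendsto (fun x => f x / x) (𝓝[>] (0 : ℝ)) (𝓝 c) := by
    refine (hslope.mono_left hsub).congr fun x => ?_
    rw [slope_def_field, hf0]
    simp
  have hgne : ∀ᶠ x in 𝓝[>] (0 : ℝ), f x / x ≠ 0 := hg.eventually_ne hcne
  have hx1 : ∀ᶠ x in 𝓝[>] (0 : ℝ), x < 1 :=
    eventually_nhdsWithin_of_eventually_nhds (Filter.Tendsto.eventually_lt_const
      (by norm_num : (0 : ℝ) < 1) tendsto_id)
  have hmain : ∀ᶠ x in 𝓝[>] (0 : ℝ), δ * Real.log (f x) / Real.log x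
      = δ * (Real.log (f x / x) / Real.log x) + δ := by
    filter_upwards [hgne, self_mem_nhdsWithin, hx1] with x hne hxpos hxlt
    have hxpos' : (0 : ℝ) < x := hxpos
    have hxne : x ≠ 0 := ne_of_gt hxpos'
    have hlogx : Real.log x ≠ 0 := ne_of_lt (Real.log_neg hxpos' hxlt)
    have hsplit : Real.log (f x) = Real.log (f x / x) + Real.log x := by
      rw [← Real.log_mul hne hxne, div_mul_cancel₀ _ hxne]
    rw [hsplit]
    field_simp
  have hlog : Tendsto (fun x => Real.log (f x / x)) (𝓝[>] (0 : ℝ)) (𝓝 (Real.log c)) :=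
    (Real.continuousAt_log hcne).tendsto.comp hg
  have hlogx : Tendsto Real.log (𝓝[>] (0 : ℝ)) atBot :=
    Real.tendsto_log_nhdsGT_zero
  have hratio : Tendsto (fun x => Real.log (f x / x) / Real.log x) (𝓝[>] (0 : ℝ)) (𝓝 0) := by
    have h1 : Tendsto (fun x : ℝ => -Real.log x) (𝓝[>] (0 : ℝ)) atTop :=
      tendsto_neg_atBot_atTop.comp hlogx
    have h2 := (hlog.div_atTop h1).neg
    simp only [neg_zero] at h2
    exact h2.congr fun x => by rw [div_neg, neg_neg]
  have hfinal := (hratio.const_mul δ).add_const δ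
  simp only [mul_zero, zero_add] at hfinal
  exact hfinal.congr' (EventuallyEq.symm hmain)
end

section
/- For every real x > 0, every real p with 0 < p ≤ 1, every real δ with 0 < δ < 1, and every real ν ≠ 0, one has 2·exp(−x·cosh(ν·δ))·cosh(x·sinh(ν·δ)) + exp(−x·(2 − p·(1−δ))) ≥ 2·exp(−x) + exp(−x·g(ν)), where g(ν) = 2·cosh(ν·δ) − p·sinh(ν·(1−δ))/sinh(ν). -/
open Real

lemma lem3 {A B : ℝ} (hA : 0 < A) (hAB : A ≤ B) :
    B * Real.exp A + A ≤ A * Real.exp B + B := by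
  have hB : 0 < B := lt_of_lt_of_le hA hAB
  have h := convexOn_exp.2 (Set.mem_univ B) (Set.mem_univ 0)
    (show (0:ℝ) ≤ A / B by positivity)
    (show (0:ℝ) ≤ 1 - A / B by rw [sub_nonneg]; exact div_le_one_of_le₀ hAB hB.le)
    (show A / B + (1 - A / B) = 1 by ring)
  simp only [smul_eq_mul, mul_zero, add_zero, Real.exp_zero, mul_one] at h
  rw [div_mul_cancel₀ _ hB.ne'] at h
  have h2 := mul_le_mul_of_nonneg_left h hB.le
  have h3 : B * (A / B * Real.exp B + (1 - A / B)) = A * Real.exp B + B - A := by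
    field_simp; ring
  linarith [h2, h3.le, h3.ge]

lemma lem3' {A B : ℝ} (hA : 0 < A) (hAB : A ≤ B) :
    (1 - Real.exp (-A)) * (B * Real.exp (-B)) ≤ (1 - Real.exp (-B)) * (A * Real.exp (-A)) := by
  have h := lem3 hA hAB
  have hu := Real.exp_pos A
  have hv := Real.exp_pos B
  rw [Real.exp_neg, Real.exp_neg]
  rw [← sub_nonneg]
  have key : (1 - (Real.exp B)⁻¹) * (A * (Real.exp A)⁻¹) - (1 - (Real.exp A)⁻¹) * (B * (Real.exp B)⁻¹)
      = ((A * Real.exp B + B) - (B * Real.exp A + A)) / (Real.exp A * Real.exp B) := by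
    field_simp
    ring
  rw [key]
  exact div_nonneg (by linarith) (by positivity)

lemma hasDeriv_core (x : ℝ) {y : ℝ} (hy : 0 < y) :
    HasDerivAt (fun y => (1 - Real.exp (-(x*y))) * (1 - Real.exp (-(x*y⁻¹))))
      (x * Real.exp (-(x*y)) * (1 - Real.exp (-(x*y⁻¹)))
        - (1 - Real.exp (-(x*y))) * (x * (y^2)⁻¹ * Real.exp (-(x*y⁻¹)))) y := by
  have h1 : HasDerivAt (fun y : ℝ => -(x*y)) (-x) y := by
    simpa using ((hasDerivAt_id y).const_mul x).fun_neg
  have h2 : HasDerivAt (fun y : ℝ => 1 - Real.exp (-(x*y))) (-(Real.exp (-(x*y)) * (-x))) y :=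
    (h1.exp).const_sub 1
  have h3 : HasDerivAt (fun y : ℝ => -(x*y⁻¹)) (-(x * -(y^2)⁻¹)) y := by
    exact ((hasDerivAt_inv hy.ne').const_mul x).neg
  have h4 : HasDerivAt (fun y : ℝ => 1 - Real.exp (-(x*y⁻¹)))
      (-(Real.exp (-(x*y⁻¹)) * (-(x * -(y^2)⁻¹)))) y := (h3.exp).const_sub 1
  have := h2.fun_mul h4
  refine this.congr_deriv ?_
  ring

lemma core (x : ℝ) (hx : 0 < x) {a : ℝ} (ha : 0 < a) (ha1 : a ≤ 1) :
    (1 - Real.exp (-(x*a))) * (1 - Real.exp (-(x*a⁻¹))) ≤ (1 - Real.exp (-x))^2 := by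
  have hmono : MonotoneOn (fun y => (1 - Real.exp (-(x*y))) * (1 - Real.exp (-(x*y⁻¹))))
      (Set.Icc a 1) := by
    apply monotoneOn_of_deriv_nonneg (convex_Icc a 1)
    · intro y hy
      have hy0 : 0 < y := lt_of_lt_of_le ha hy.1
      exact ((hasDeriv_core x hy0).differentiableAt.continuousAt).continuousWithinAt
    · intro y hy
      rw [interior_Icc] at hy
      have hy0 : 0 < y := lt_of_lt_of_le ha hy.1.le
      exact ((hasDeriv_core x hy0).differentiableAt).differentiableWithinAt
    · intro y hy
      rw [interior_Icc] at hy
      have hy0 : 0 < y := lt_of_lt_of_le ha hy.1.le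
      have hy1 : y ≤ 1 := hy.2.le
      have hinv : y * y⁻¹ = 1 := mul_inv_cancel₀ hy0.ne'
      rw [(hasDeriv_core x hy0).deriv]
      have hA : 0 < x * y := by positivity
      have hAB : x * y ≤ x * y⁻¹ := by
        have h1my : (0:ℝ) ≤ 1 - y*y := by nlinarith
        nlinarith [mul_nonneg (mul_nonneg hx.le (inv_nonneg.2 hy0.le)) h1my]
      have h := mul_le_mul_of_nonneg_right (lem3' hA hAB) (inv_nonneg.2 hy0.le)
      have e1 : (1 - Real.exp (-(x*y))) * (x * y⁻¹ * Real.exp (-(x*y⁻¹))) * y⁻¹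
          = (1 - Real.exp (-(x*y))) * (x * (y^2)⁻¹ * Real.exp (-(x*y⁻¹))) := by
        rw [sq, mul_inv]; ring
      have e2 : (1 - Real.exp (-(x*y⁻¹))) * (x * y * Real.exp (-(x*y))) * y⁻¹
          = (1 - Real.exp (-(x*y⁻¹))) * (x * Real.exp (-(x*y))) := by
        linear_combination (1 - Real.exp (-(x*y⁻¹))) * x * Real.exp (-(x*y)) * hinv
      rw [e1, e2] at h
      linarith
  have h := hmono (Set.mem_Icc.2 ⟨le_refl a, ha1⟩) (Set.mem_Icc.2 ⟨ha1, le_refl 1⟩) ha1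
  simpa [sq] using h

lemma sinh_convex : ConvexOn ℝ (Set.Ici 0) Real.sinh := by
  apply convexOn_of_deriv2_nonneg (convex_Ici 0) Real.continuous_sinh.continuousOn
  · exact Real.differentiable_sinh.differentiableOn
  · rw [Real.deriv_sinh]
    exact Real.differentiable_cosh.differentiableOn
  · intro y hy
    rw [interior_Ici] at hy
    have h2 : deriv^[2] Real.sinh y = Real.sinh y := by
      simp [Function.iterate_succ_apply', Real.deriv_sinh, Real.deriv_cosh]
    rw [h2]
    exact (Real.sinh_pos_iff.2 hy).le

lemma sinh_mul_le {l ν : ℝ} (hl0 : 0 ≤ l) (hl1 : l ≤ 1) (hν : 0 ≤ ν) :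
    Real.sinh (l * ν) ≤ l * Real.sinh ν := by
  have h := sinh_convex.2 (Set.mem_Ici.2 hν) (Set.mem_Ici.2 (le_refl 0)) hl0
    (by linarith : (0:ℝ) ≤ 1 - l) (by ring)
  simpa using h

set_option maxHeartbeats 1000000 in
lemma main_pos (x : ℝ) (hx : 0 < x) (p : ℝ) (hp0 : 0 < p) (hp1 : p ≤ 1)
    (δ : ℝ) (hδ0 : 0 < δ) (hδ1 : δ < 1) (ν : ℝ) (hν : 0 < ν) :
    2 * Real.exp (-x) +
        Real.exp (-x * (2 * Real.cosh (ν * δ) -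
          p * Real.sinh (ν * (1 - δ)) / Real.sinh ν)) ≤
      2 * Real.exp (-x * Real.cosh (ν * δ)) * Real.cosh (x * Real.sinh (ν * δ)) +
        Real.exp (-x * (2 - p * (1 - δ))) := by
  set t := ν * δ with ht_def
  have ht : 0 < t := mul_pos hν hδ0
  set R := p * Real.sinh (ν * (1 - δ)) / Real.sinh ν with hR_def
  set a := Real.exp (-t) with ha_def
  set b := Real.exp t with hb_def
  have ha0 : 0 < a := Real.exp_pos _
  have hb0 : 0 < b := Real.exp_pos _
  have ha1 : a < 1 := Real.exp_lt_one_iff.2 (by linarith)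
  have hab : a * b = 1 := by rw [ha_def, hb_def, ← Real.exp_add]; simp
  have hc : Real.cosh t = (a + b) / 2 := by rw [Real.cosh_eq]; ring
  have hs : Real.sinh t = (b - a) / 2 := by rw [Real.sinh_eq]
  have e1 : Real.exp (-x * ((a+b)/2)) * Real.exp (x * ((b-a)/2)) = Real.exp (-(x*a)) := by
    rw [← Real.exp_add]; congr 1; ring
  have e2 : Real.exp (-x * ((a+b)/2)) * Real.exp (-(x * ((b-a)/2))) = Real.exp (-(x*b)) := by
    rw [← Real.exp_add]; congr 1; ring
  have key : 2 * Real.exp (-x * Real.cosh t) * Real.cosh (x * Real.sinh t)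
      = Real.exp (-(x*a)) + Real.exp (-(x*b)) := by
    rw [hc, hs, Real.cosh_eq]
    linear_combination e1 + e2
  rw [key]
  -- bounds on R
  have hsν : 0 < Real.sinh ν := Real.sinh_pos_iff.2 hν
  have hR0 : 0 ≤ R := by
    apply div_nonneg _ hsν.le
    exact mul_nonneg hp0.le (Real.sinh_nonneg_iff.2 (by nlinarith))
  have hs1 : Real.sinh (ν * (1-δ)) ≤ (1-δ) * Real.sinh ν := by
    have := sinh_mul_le (l := 1-δ) (by linarith) (by linarith) hν.le
    simpa [mul_comm] using this
  have hRκ : R ≤ p * (1 - δ) := by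
    rw [hR_def, div_le_iff₀ hsν]
    nlinarith [mul_le_mul_of_nonneg_left hs1 hp0.le]
  -- abbreviations
  set u := Real.exp (-(x*a)) with hu_def
  set v := Real.exp (-(x*b)) with hv_def
  set w := Real.exp (-x) with hw_def
  have hbinv : a⁻¹ = b := by rw [ha_def, Real.exp_neg, inv_inv]
  have hcore : (1-u)*(1-v) ≤ (1-w)^2 := by
    have := core x hx ha0 ha1.le
    rwa [hbinv] at this
  have hcore' : 2*w - w*w ≤ u + v - u*v := by nlinarith [hcore]
  have hab2 : 2 ≤ a + b := by nlinarith [mul_nonneg (mul_nonneg (sub_nonneg.2 ha1.le) (sub_nonneg.2 ha1.le)) hb0.le, hab]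
  have huv : u * v = Real.exp (-(x*(a+b))) := by
    rw [hu_def, hv_def, ← Real.exp_add]; congr 1; ring
  have hww : w * w = Real.exp (-(2*x)) := by
    rw [hw_def, ← Real.exp_add]; congr 1; ring
  have huvw : u * v ≤ w * w := by
    rw [huv, hww]
    have h2x : x * 2 ≤ x * (a + b) := mul_le_mul_of_nonneg_left hab2 hx.le
    exact Real.exp_le_exp.2 (by linarith)
  have hgl : Real.exp (-x * (2 * Real.cosh t - R)) = u * v * Real.exp (x*R) := by
    rw [hu_def, hv_def, show -x * (2 * Real.cosh t - R) = (-(x*a) + -(x*b)) + x*R by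
      rw [hc]; ring, Real.exp_add, Real.exp_add]
  have hgr : Real.exp (-x * (2 - p*(1-δ))) = w * w * Real.exp (x*(p*(1-δ))) := by
    rw [hw_def, show -x * (2 - p*(1-δ)) = (-x + -x) + x*(p*(1-δ)) by ring,
      Real.exp_add, Real.exp_add]
  rw [hgl, hgr]
  have hE1 : 1 ≤ Real.exp (x*R) := Real.one_le_exp (by positivity)
  have hER : Real.exp (x*R) ≤ Real.exp (x*(p*(1-δ))) :=
    Real.exp_le_exp.2 (mul_le_mul_of_nonneg_left hRκ hx.le)
  nlinarith [mul_nonneg (sub_nonneg.2 huvw) (sub_nonneg.2 hE1),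
    mul_nonneg (mul_pos (Real.exp_pos (-x)) (Real.exp_pos (-x))).le (sub_nonneg.2 hER),
    hcore', mul_pos (Real.exp_pos (-(x*a))) (Real.exp_pos (-(x*b)))]

theorem stmt11 (x : ℝ) (hx : 0 < x) (p : ℝ) (hp0 : 0 < p) (hp1 : p ≤ 1)
    (δ : ℝ) (hδ0 : 0 < δ) (hδ1 : δ < 1) (ν : ℝ) (hν : ν ≠ 0) :
    2 * Real.exp (-x) +
        Real.exp (-x * (2 * Real.cosh (ν * δ) -
          p * Real.sinh (ν * (1 - δ)) / Real.sinh ν)) ≤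
      2 * Real.exp (-x * Real.cosh (ν * δ)) * Real.cosh (x * Real.sinh (ν * δ)) +
        Real.exp (-x * (2 - p * (1 - δ))) := by
  rcases hν.lt_or_gt with hneg | hpos
  · have h := main_pos x hx p hp0 hp1 δ hδ0 hδ1 (-ν) (by linarith)
    simpa [neg_mul, Real.sinh_neg, Real.cosh_neg, mul_neg, neg_div_neg_eq] using h
  · exact main_pos x hx p hp0 hp1 δ hδ0 hδ1 ν hpos
end
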